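/- Let A be a complex unital Banach algebra and x ∈ A. Then x has strongly g-Drazin inverse (i.e., x is the sum of a commuting idempotent and quasinilpotent) if and only if x − x² is quasinilpotent. -/

import Mathlib

open Filter Finset
open scoped ENNReal NNReal Topology

/-- An element of a complex (Banach) algebra is quasinilpotent if its spectral radius is zero. -/
noncomputable def Quasinilpotent {A : Type*} [Ring A] [Algebra ℂ A] (q : A) : Prop :=
  spectralRadius ℂ q = 0

/-- `a` has a generalized Drazin inverse: some `b` with `ab = ba`, `b = bab`,
and `a - a²b` quasinilpotent. -/
noncomputable def HasGDrazin {A : Type*} [Ring A] [Algebra ℂ A] (a : A) : Prop :=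
  ∃ b : A, a * b = b * a ∧ b = b * a * b ∧ Quasinilpotent (a - a ^ 2 * b)

set_option linter.unusedSectionVars false

section Helpers
variable {A : Type*} [NormedRing A] [NormedAlgebra ℂ A] [CompleteSpace A]

/-- product of a commuting pair with a quasinilpotent is quasinilpotent -/
lemma quasi_mul {a b : A} (h : Commute a b) (hb : Quasinilpotent b) :
    Quasinilpotent (a * b) := by
  have hab := spectrum.pow_nnnorm_pow_one_div_tendsto_nhds_spectralRadius (a * b)
  have hbt := spectrum.pow_nnnorm_pow_one_div_tendsto_nhds_spectralRadius b
  rw [hb] at hbt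
  have hconst : Tendsto (fun n : ℕ => (‖a‖₊ : ℝ≥0∞) * (‖b ^ n‖₊ : ℝ≥0∞) ^ (1 / n : ℝ))
      atTop (𝓝 0) := by
    have := ENNReal.Tendsto.const_mul (a := (‖a‖₊ : ℝ≥0∞)) hbt (Or.inr ENNReal.coe_ne_top)
    simpa using this
  have hle : ∀ᶠ n : ℕ in atTop, ((‖(a * b) ^ n‖₊ : ℝ≥0∞) ^ (1 / n : ℝ)) ≤
      (‖a‖₊ : ℝ≥0∞) * (‖b ^ n‖₊ : ℝ≥0∞) ^ (1 / n : ℝ) := by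
    filter_upwards [eventually_ge_atTop 1] with n hn
    have h1 : (‖(a * b) ^ n‖₊ : ℝ≥0∞) ≤ ((‖a‖₊ : ℝ≥0∞)) ^ n * (‖b ^ n‖₊ : ℝ≥0∞) := by
      rw [h.mul_pow]
      calc (‖a ^ n * b ^ n‖₊ : ℝ≥0∞) ≤ ((‖a ^ n‖₊ * ‖b ^ n‖₊ : ℝ≥0) : ℝ≥0∞) := by
            exact_mod_cast nnnorm_mul_le _ _
        _ ≤ _ := by
            push_cast
            gcongr
            exact_mod_cast nnnorm_pow_le' a hn
    have hnn : (0:ℝ) ≤ 1 / (n : ℝ) := by positivity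
    calc ((‖(a * b) ^ n‖₊ : ℝ≥0∞) ^ (1 / n : ℝ))
        ≤ (((‖a‖₊ : ℝ≥0∞)) ^ n * (‖b ^ n‖₊ : ℝ≥0∞)) ^ (1 / n : ℝ) :=
          ENNReal.rpow_le_rpow h1 hnn
      _ = (((‖a‖₊ : ℝ≥0∞)) ^ n) ^ (1 / n : ℝ) * (‖b ^ n‖₊ : ℝ≥0∞) ^ (1 / n : ℝ) :=
          ENNReal.mul_rpow_of_nonneg _ _ hnn
      _ = (‖a‖₊ : ℝ≥0∞) * (‖b ^ n‖₊ : ℝ≥0∞) ^ (1 / n : ℝ) := by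
          rw [← ENNReal.rpow_natCast, ← ENNReal.rpow_mul, mul_one_div_cancel, ENNReal.rpow_one]
          exact_mod_cast Nat.one_le_iff_ne_zero.mp hn
  have := le_of_tendsto_of_tendsto hab hconst hle
  exact le_antisymm (by simpa using this) zero_le

lemma quasi_norm_pow_le {q : A} (hq : Quasinilpotent q) {ε : ℝ} (hε : 0 < ε) :
    ∀ᶠ n : ℕ in atTop, ‖q ^ n‖ ≤ ε ^ n := by
  have h := spectrum.pow_nnnorm_pow_one_div_tendsto_nhds_spectralRadius q
  rw [hq] at h
  have hev : ∀ᶠ n : ℕ in atTop, (‖q ^ n‖₊ : ℝ≥0∞) ^ (1 / n : ℝ) < ENNReal.ofReal ε :=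
    h.eventually_lt_const (by simpa using hε)
  filter_upwards [hev, eventually_ge_atTop 1] with n hn hn1
  have hne : ((n : ℝ)) ≠ 0 := by exact_mod_cast Nat.one_le_iff_ne_zero.mp hn1
  have h2 : ((‖q ^ n‖₊ : ℝ≥0∞) ^ (1 / n : ℝ)) ^ (n : ℝ) ≤ (ENNReal.ofReal ε) ^ (n : ℝ) :=
    ENNReal.rpow_le_rpow hn.le (by positivity)
  rw [← ENNReal.rpow_mul, one_div_mul_cancel hne, ENNReal.rpow_one] at h2
  rw [ENNReal.ofReal_rpow_of_pos hε, Real.rpow_natCast] at h2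
  rw [← ENNReal.ofReal_coe_nnreal, coe_nnnorm] at h2
  exact (ENNReal.ofReal_le_ofReal_iff (by positivity)).mp h2

lemma summable_pow_mul {q : A} (hq : Quasinilpotent q) {c : ℝ} (hc : 0 < c) :
    Summable fun n => c ^ n * ‖q ^ n‖ := by
  have hε : (0:ℝ) < 1 / (2 * c) := by positivity
  obtain ⟨N, hN⟩ := eventually_atTop.mp (quasi_norm_pow_le hq hε)
  refine (summable_nat_add_iff (f := fun n => c ^ n * ‖q ^ n‖) N).mp ?_
  have hgeo : Summable fun n : ℕ => (1/2 : ℝ) ^ (n + N) := by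
    simpa [pow_add] using (summable_geometric_of_lt_one (r := 1/2) (by norm_num) (by norm_num)).mul_right
      ((1/2 : ℝ) ^ N)
  refine hgeo.of_nonneg_of_le (fun n => by positivity) (fun n => ?_)
  have h1 : ‖q ^ (n + N)‖ ≤ (1 / (2 * c)) ^ (n + N) := hN (n + N) (Nat.le_add_left _ _)
  calc c ^ (n + N) * ‖q ^ (n + N)‖ ≤ c ^ (n + N) * (1 / (2 * c)) ^ (n + N) := by
        gcongr
    _ = (1/2 : ℝ) ^ (n + N) := by
        rw [← mul_pow]
        congr 1
        field_simp
end Helpers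

/-- the central binomial convolution identity -/
lemma central_conv : ∀ n : ℕ,
    ∑ k ∈ range (n + 1), Nat.centralBinom k * Nat.centralBinom (n - k) = 4 ^ n := by
  have two_U : ∀ n : ℕ, 2 * ∑ k ∈ range (n + 1), k * (Nat.centralBinom k * Nat.centralBinom (n - k))
      = n * ∑ k ∈ range (n + 1), Nat.centralBinom k * Nat.centralBinom (n - k) := by
    intro n
    have hrefl : ∑ k ∈ range (n + 1), k * (Nat.centralBinom k * Nat.centralBinom (n - k))
        = ∑ k ∈ range (n + 1), (n - k) * (Nat.centralBinom (n - k) * Nat.centralBinom k) := by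
      rw [← Finset.sum_range_reflect
        (fun k => k * (Nat.centralBinom k * Nat.centralBinom (n - k))) (n + 1)]
      refine Finset.sum_congr rfl fun k hk => ?_
      have hk' : k ≤ n := Nat.lt_succ_iff.mp (Finset.mem_range.mp hk)
      have : n + 1 - 1 - k = n - k := by omega
      rw [this, Nat.sub_sub_self hk']
    calc 2 * ∑ k ∈ range (n + 1), k * (Nat.centralBinom k * Nat.centralBinom (n - k))
        = (∑ k ∈ range (n + 1), k * (Nat.centralBinom k * Nat.centralBinom (n - k)))
          + ∑ k ∈ range (n + 1), (n - k) * (Nat.centralBinom (n - k) * Nat.centralBinom k) := by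
          rw [← hrefl]; ring
      _ = ∑ k ∈ range (n + 1), n * (Nat.centralBinom k * Nat.centralBinom (n - k)) := by
          rw [← Finset.sum_add_distrib]
          refine Finset.sum_congr rfl fun k hk => ?_
          have hk' : k ≤ n := Nat.lt_succ_iff.mp (Finset.mem_range.mp hk)
          have : k + (n - k) = n := by omega
          calc k * (Nat.centralBinom k * Nat.centralBinom (n - k))
                + (n - k) * (Nat.centralBinom (n - k) * Nat.centralBinom k)
              = (k + (n - k)) * (Nat.centralBinom k * Nat.centralBinom (n - k)) := by ring
            _ = _ := by rw [this]
      _ = _ := by rw [← Finset.mul_sum]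
  have T_eq : ∀ n : ℕ, ∑ k ∈ range (n + 1),
      (2 * (2 * k + 1)) * (Nat.centralBinom k * Nat.centralBinom (n - k))
      = ∑ j ∈ range (n + 2), j * (Nat.centralBinom j * Nat.centralBinom (n + 1 - j)) := by
    intro n
    rw [Finset.sum_range_succ' (fun j => j * (Nat.centralBinom j * Nat.centralBinom (n + 1 - j)))
      (n + 1)]
    simp only [Nat.zero_eq, zero_mul, add_zero]
    refine Finset.sum_congr rfl fun k hk => ?_
    have h1 : n + 1 - (k + 1) = n - k := by omega
    rw [h1]
    have h2 : (k + 1) * Nat.centralBinom (k + 1) = 2 * (2 * k + 1) * Nat.centralBinom k :=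
      Nat.succ_mul_centralBinom_succ k
    calc (2 * (2 * k + 1)) * (Nat.centralBinom k * Nat.centralBinom (n - k))
        = (2 * (2 * k + 1) * Nat.centralBinom k) * Nat.centralBinom (n - k) := by ring
      _ = ((k + 1) * Nat.centralBinom (k + 1)) * Nat.centralBinom (n - k) := by rw [h2]
      _ = (k + 1) * (Nat.centralBinom (k + 1) * Nat.centralBinom (n - k)) := by ring
  intro n
  induction n with
  | zero => simp [Nat.centralBinom_zero]
  | succ n ih =>
    have key : (n + 1) * ∑ k ∈ range (n + 2),
        Nat.centralBinom k * Nat.centralBinom (n + 1 - k)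
        = (n + 1) * (4 * ∑ k ∈ range (n + 1), Nat.centralBinom k * Nat.centralBinom (n - k)) := by
      have e1 := two_U (n + 1)
      have e2 := T_eq n
      have e3 := two_U n
      have e4 : ∑ k ∈ range (n + 1),
          (2 * (2 * k + 1)) * (Nat.centralBinom k * Nat.centralBinom (n - k))
          = 4 * (∑ k ∈ range (n + 1), k * (Nat.centralBinom k * Nat.centralBinom (n - k)))
            + 2 * ∑ k ∈ range (n + 1), Nat.centralBinom k * Nat.centralBinom (n - k) := by
        rw [Finset.mul_sum, Finset.mul_sum, ← Finset.sum_add_distrib]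
        exact Finset.sum_congr rfl fun k _ => by ring
      -- (n+1) * S(n+1) = 2 * U(n+1) = 2 * T n = 2*(4U n + 2 S n) = 4n S n + 4 S n
      calc (n + 1) * ∑ k ∈ range (n + 2), Nat.centralBinom k * Nat.centralBinom (n + 1 - k)
          = 2 * ∑ j ∈ range (n + 2), j * (Nat.centralBinom j * Nat.centralBinom (n + 1 - j)) :=
            e1.symm
        _ = 2 * ∑ k ∈ range (n + 1),
              (2 * (2 * k + 1)) * (Nat.centralBinom k * Nat.centralBinom (n - k)) := by rw [e2]
        _ = 4 * (2 * ∑ k ∈ range (n + 1), k * (Nat.centralBinom k * Nat.centralBinom (n - k)))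
            + 4 * ∑ k ∈ range (n + 1), Nat.centralBinom k * Nat.centralBinom (n - k) := by
            rw [e4]; ring
        _ = 4 * (n * ∑ k ∈ range (n + 1), Nat.centralBinom k * Nat.centralBinom (n - k))
            + 4 * ∑ k ∈ range (n + 1), Nat.centralBinom k * Nat.centralBinom (n - k) := by
            rw [e3]
        _ = (n + 1) * (4 * ∑ k ∈ range (n + 1), Nat.centralBinom k * Nat.centralBinom (n - k)) := by
            ring
    have := Nat.eq_of_mul_eq_mul_left (Nat.succ_pos n) key
    rw [this, ih]
    ring

lemma centralBinom_le_four_pow (n : ℕ) : Nat.centralBinom n ≤ 4 ^ n := by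
  have h1 : Nat.centralBinom n ≤ ∑ i ∈ range (2 * n + 1), (2 * n).choose i :=
    Finset.single_le_sum (f := fun i => (2 * n).choose i) (fun i _ => Nat.zero_le _)
      (Finset.mem_range.mpr (by omega))
  have h2 : ∑ i ∈ range (2 * n + 1), (2 * n).choose i = 2 ^ (2 * n) := Nat.sum_range_choose (2 * n)
  calc Nat.centralBinom n ≤ 2 ^ (2 * n) := h1.trans_eq h2
    _ = 4 ^ n := by rw [pow_mul]; norm_num

section Main
variable {A : Type*} [NormedRing A] [NormedAlgebra ℂ A] [CompleteSpace A]

lemma commute_tsum {z : A} {f : ℕ → A} (hf : Summable f) (h : ∀ n, Commute z (f n)) :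
    Commute z (∑' n, f n) := by
  show z * _ = _ * z
  rw [← hf.tsum_mul_left z, ← hf.tsum_mul_right z]
  exact tsum_congr fun n => (h n).eq

lemma norm_cast_mul_le (m : ℕ) (a : A) : ‖(m : A) * a‖ ≤ (m : ℝ) * ‖(1 : A)‖ * ‖a‖ := by
  calc ‖(m : A) * a‖ ≤ ‖(m : A)‖ * ‖a‖ := norm_mul_le _ _
    _ ≤ (m : ℝ) * ‖(1 : A)‖ * ‖a‖ := by
        gcongr
        have : (m : A) = m • (1 : A) := by simp
        rw [this]
        simpa using norm_nsmul_le (n := m) (a := (1 : A))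

lemma reverse_dir (x : A) (hq : Quasinilpotent (x - x ^ 2)) :
    ∃ e w : A, e * e = e ∧ Quasinilpotent w ∧ e * w = w * e ∧ x = e + w := by
  set q : A := x - x ^ 2 with hqdef
  -- basic commutations
  have hxq : Commute x q := ((Commute.refl x).sub_right ((Commute.refl x).pow_right 2))
  have hc2 : ∀ z : A, Commute (2 : A) z := fun z => by
    simpa using (Nat.cast_commute (2 : ℕ) z)
  have hc4 : ∀ z : A, Commute (4 : A) z := fun z => by
    simpa using (Nat.cast_commute (4 : ℕ) z)
  set y : A := (4 : A) * q with hydef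
  have hyq : Quasinilpotent y := quasi_mul (hc4 q) hq
  have hypow : ∀ n : ℕ, y ^ n = ((4 ^ n : ℕ) : A) * q ^ n := by
    intro n
    rw [hydef, (hc4 q).mul_pow]
    push_cast
    ring
  -- summability
  have hsum4 : Summable fun n : ℕ => (4 : ℝ) ^ n * ‖q ^ n‖ := summable_pow_mul hq (by norm_num)
  set f : ℕ → A := fun n => ((Nat.centralBinom n : ℕ) : A) * q ^ n with hfdef
  set g : ℕ → A := fun n => ((Nat.centralBinom (n + 1) : ℕ) : A) * q ^ n with hgdef
  have hfb : ∀ n, ‖f n‖ ≤ ‖(1 : A)‖ * ((4 : ℝ) ^ n * ‖q ^ n‖) := by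
    intro n
    calc ‖f n‖ ≤ ((Nat.centralBinom n : ℕ) : ℝ) * ‖(1 : A)‖ * ‖q ^ n‖ := norm_cast_mul_le _ _
      _ ≤ ((4 : ℝ) ^ n) * ‖(1 : A)‖ * ‖q ^ n‖ := by
          gcongr
          exact_mod_cast centralBinom_le_four_pow n
      _ = ‖(1 : A)‖ * ((4 : ℝ) ^ n * ‖q ^ n‖) := by ring
  have hgb : ∀ n, ‖g n‖ ≤ (4 * ‖(1 : A)‖) * ((4 : ℝ) ^ n * ‖q ^ n‖) := by
    intro n
    calc ‖g n‖ ≤ ((Nat.centralBinom (n + 1) : ℕ) : ℝ) * ‖(1 : A)‖ * ‖q ^ n‖ := norm_cast_mul_le _ _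
      _ ≤ ((4 : ℝ) ^ (n + 1)) * ‖(1 : A)‖ * ‖q ^ n‖ := by
          gcongr
          exact_mod_cast centralBinom_le_four_pow (n + 1)
      _ = (4 * ‖(1 : A)‖) * ((4 : ℝ) ^ n * ‖q ^ n‖) := by ring
  have hsumfn : Summable fun n => ‖f n‖ :=
    (hsum4.mul_left ‖(1 : A)‖).of_nonneg_of_le (fun n => norm_nonneg _) hfb
  have hsumf : Summable f := hsumfn.of_norm
  have hsumgn : Summable fun n => ‖g n‖ :=
    (hsum4.mul_left (4 * ‖(1 : A)‖)).of_nonneg_of_le (fun n => norm_nonneg _) hgb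
  have hsumg : Summable g := hsumgn.of_norm
  have hsumyn : Summable fun n => ‖y ^ n‖ := by
    refine (hsum4.mul_left ‖(1 : A)‖).of_nonneg_of_le (fun n => norm_nonneg _) (fun n => ?_)
    rw [hypow n]
    calc ‖((4 ^ n : ℕ) : A) * q ^ n‖ ≤ ((4 ^ n : ℕ) : ℝ) * ‖(1 : A)‖ * ‖q ^ n‖ :=
          norm_cast_mul_le _ _
      _ = ‖(1 : A)‖ * ((4 : ℝ) ^ n * ‖q ^ n‖) := by push_cast; ring
  have hsumy : Summable fun n : ℕ => y ^ n := hsumyn.of_norm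
  -- Neumann series: N is a two-sided inverse of 1 - y
  set N : A := ∑' n : ℕ, y ^ n with hNdef
  have hy0 : Tendsto (fun n : ℕ => y ^ n) atTop (𝓝 0) := hsumy.tendsto_atTop_zero
  have hlim1 : Tendsto (fun n : ℕ => 1 - y ^ n) atTop (𝓝 1) := by
    simpa using (tendsto_const_nhds (x := (1 : A))).sub hy0
  have hmul1 : N * (1 - y) = 1 := by
    have hpt : Tendsto (fun n : ℕ => (∑ i ∈ range n, y ^ i) * (1 - y)) atTop
        (𝓝 (N * (1 - y))) := (hsumy.hasSum.tendsto_sum_nat).mul_const _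
    have hval : ∀ n : ℕ, (∑ i ∈ range n, y ^ i) * (1 - y) = 1 - y ^ n := by
      intro n
      have h := geom_sum_mul y n
      have : (∑ i ∈ range n, y ^ i) * (1 - y) = -((∑ i ∈ range n, y ^ i) * (y - 1)) := by
        noncomm_ring
      rw [this, h, neg_sub]
    simp only [hval] at hpt
    exact tendsto_nhds_unique hpt hlim1
  have hmul2 : (1 - y) * N = 1 := by
    have hpt : Tendsto (fun n : ℕ => (1 - y) * ∑ i ∈ range n, y ^ i) atTop
        (𝓝 ((1 - y) * N)) := (hsumy.hasSum.tendsto_sum_nat).const_mul _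
    have hval : ∀ n : ℕ, (1 - y) * (∑ i ∈ range n, y ^ i) = 1 - y ^ n := by
      intro n
      have h := mul_geom_sum y n
      have : (1 - y) * (∑ i ∈ range n, y ^ i) = -((y - 1) * ∑ i ∈ range n, y ^ i) := by
        noncomm_ring
      rw [this, h, neg_sub]
    simp only [hval] at hpt
    exact tendsto_nhds_unique hpt hlim1
  -- Cauchy product: r * r = N
  set r : A := ∑' n, f n with hrdef
  have hr2 : r * r = N := by
    rw [hrdef, tsum_mul_tsum_eq_tsum_sum_antidiagonal_of_summable_norm hsumfn hsumfn, hNdef]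
    refine tsum_congr fun n => ?_
    rw [Finset.Nat.sum_antidiagonal_eq_sum_range_succ_mk]
    have hterm : ∀ k ∈ range (n + 1), f k * f (n - k) =
        ((Nat.centralBinom k * Nat.centralBinom (n - k) : ℕ) : A) * q ^ n := by
      intro k hk
      have hk' : k ≤ n := Nat.lt_succ_iff.mp (Finset.mem_range.mp hk)
      have hqk : q ^ k * q ^ (n - k) = q ^ n := by
        rw [← pow_add]
        congr 1
        omega
      rw [hfdef]
      simp only []
      calc ((Nat.centralBinom k : ℕ) : A) * q ^ k * (((Nat.centralBinom (n - k) : ℕ) : A) * q ^ (n - k))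
          = ((Nat.centralBinom k : ℕ) : A) * (q ^ k * ((Nat.centralBinom (n - k) : ℕ) : A)) * q ^ (n - k) := by
            noncomm_ring
        _ = ((Nat.centralBinom k : ℕ) : A) * (((Nat.centralBinom (n - k) : ℕ) : A) * q ^ k) * q ^ (n - k) := by
            rw [(Nat.cast_commute (Nat.centralBinom (n - k)) (q ^ k)).symm.eq]
        _ = (((Nat.centralBinom k : ℕ) : A) * ((Nat.centralBinom (n - k) : ℕ) : A)) * (q ^ k * q ^ (n - k)) := by
            noncomm_ring
        _ = ((Nat.centralBinom k * Nat.centralBinom (n - k) : ℕ) : A) * q ^ n := by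
            rw [hqk]; push_cast; ring
    rw [Finset.sum_congr rfl hterm, ← Finset.sum_mul, ← Nat.cast_sum, central_conv n, hypow n]
  -- define t, e, w
  set s : A := 2 * x - 1 with hsdef
  have hss : s * s = 1 - y := by
    rw [hsdef, hydef, hqdef]
    noncomm_ring
  have hxf : ∀ n, Commute x (f n) :=
    fun n => ((Nat.cast_commute (Nat.centralBinom n) x).symm).mul_right (hxq.pow_right n)
  have hxr : Commute x r := commute_tsum hsumf hxf
  have hxs : Commute x s := ((hc2 x).symm.mul_right (Commute.refl x)).sub_right (Commute.one_right x)
  have hsr : Commute s r := by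
    rw [hsdef]
    exact ((hc2 r).mul_left hxr).sub_left (Commute.one_left r)
  set t : A := s * r with htdef
  have htt : t * t = 1 := by
    have h1 : s * r * (s * r) = s * s * (r * r) := by
      calc s * r * (s * r) = s * (r * s) * r := by noncomm_ring
        _ = s * (s * r) * r := by rw [hsr.symm.eq]
        _ = s * s * (r * r) := by noncomm_ring
    rw [htdef, h1, hss, hr2, hmul2]
  set e : A := (2⁻¹ : ℂ) • (1 + t) with hedef
  have h2smul : ∀ z : A, (2 : A) * z = (2 : ℂ) • z := by
    intro z
    rw [Algebra.smul_def, map_ofNat]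
  have hee : e * e = e := by
    have expand : (1 + t) * (1 + t) = t * t + 2 * t + 1 := by noncomm_ring
    rw [htt] at expand
    have h1 : (1 + t) * (1 + t) = 2 * (1 + t) := by rw [expand]; noncomm_ring
    rw [hedef, smul_mul_assoc, mul_smul_comm, smul_smul, h1, h2smul, smul_smul]
    norm_num
  have hxt : Commute x t := hxs.mul_right hxr
  have hxe : Commute x e := ((Commute.one_right x).add_right hxt).smul_right _
  refine ⟨e, x - e, hee, ?_, ?_, by abel⟩
  · -- Quasinilpotent (x - e)
    set m : A := ∑' n, g n with hmdef
    have hqm : Commute q m := commute_tsum hsumg fun n =>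
      ((Nat.cast_commute (Nat.centralBinom (n + 1)) q).symm).mul_right ((Commute.refl q).pow_right n)
    have hqs : Commute q s := by
      rw [hsdef]
      exact (((hc2 q).symm).mul_right hxq.symm).sub_right (Commute.one_right q)
    have hr_split : r = 1 + q * m := by
      rw [hrdef, Summable.tsum_eq_zero_add hsumf]
      congr 1
      · simp [hfdef, Nat.centralBinom_zero]
      · rw [hmdef, ← hsumg.tsum_mul_left q]
        refine tsum_congr fun n => ?_
        show ((Nat.centralBinom (n + 1) : ℕ) : A) * q ^ (n + 1) =
          q * (((Nat.centralBinom (n + 1) : ℕ) : A) * q ^ n)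
        rw [pow_succ', ← mul_assoc, (Nat.cast_commute (Nat.centralBinom (n + 1)) q).eq, mul_assoc]
    have hwq : x - e = ((-(2⁻¹ : ℂ)) • (s * m)) * q := by
      have hx2 : x = (2⁻¹ : ℂ) • (1 + s) := by
        have h0 : (1 : A) + s = (2 : ℂ) • x := by
          rw [← h2smul, hsdef]; noncomm_ring
        rw [h0, smul_smul]
        norm_num
      rw [hedef, hx2, ← smul_sub]
      have h1 : (1 + s) - (1 + t) = s - t := by abel
      rw [h1, htdef, hr_split]
      have h2 : s - s * (1 + q * m) = -(s * (q * m)) := by noncomm_ring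
      rw [h2]
      have h3 : s * (q * m) = (s * m) * q := by
        calc s * (q * m) = (s * q) * m := by noncomm_ring
          _ = (q * s) * m := by rw [hqs.symm.eq]
          _ = q * (s * m) := by noncomm_ring
          _ = (s * m) * q := (hqs.mul_right hqm).eq
      rw [h3, smul_neg, ← smul_mul_assoc, ← neg_mul, ← neg_smul]
    rw [hwq]
    exact quasi_mul (((hqs.mul_right hqm).symm).smul_left _) hq
  · -- e * (x - e) = (x - e) * e
    have : Commute e (x - e) := hxe.symm.sub_right (Commute.refl e)
    exact this.eq
end Main

theorem stmt19 {A : Type*} [NormedRing A] [NormedAlgebra ℂ A] [CompleteSpace A] (x : A) :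
    (∃ e w : A, e * e = e ∧ Quasinilpotent w ∧ e * w = w * e ∧ x = e + w) ↔
      Quasinilpotent (x - x ^ 2) := by
  constructor
  · rintro ⟨e, w, hee, hw, hew, rfl⟩
    have hc2w : Commute (2 : A) w := by simpa using Nat.cast_commute (2 : ℕ) w
    have hcomm : Commute (1 - 2 * e - w) w :=
      ((Commute.one_left w).sub_left (hc2w.mul_left (hew : Commute e w))).sub_left
        (Commute.refl w)
    have key : (e + w) - (e + w) ^ 2 = (1 - 2 * e - w) * w := by
      have h1 : (e + w) * (e + w) = e * e + e * w + w * e + w * w := by noncomm_ring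
      rw [pow_two, h1, hee, ← hew]
      noncomm_ring
    rw [key]
    exact quasi_mul hcomm hw
  · exact reverse_dir x
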